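/- arXiv:2503.08942 — 2 statements merged into one kernel-verified Lean document; each statement's English description precedes it below -/
import Mathlib

section
/- Let μ be a fixed probability distribution on Y, let π^s = Uniform(Y) × Uniform(Y), and let η > 0, β > 0. Then the single gradient step θ' = θ − (ηβ|Y|/4) · ∇_θ L_IPO(θ; π^s, μ) induces the same softmax policy as the EGPO-style update: π_{θ'} = π_{θ''} where θ'' = (1−ηβ) θ + ηβ (θ_ref + (Pμ)/β). In particular, θ' and θ'' differ only by a multiple of the all-ones vector. -/
open Real

/-- Tabular softmax policy. -/
noncomputable def softmax {Y : Type*} [Fintype Y] (θ : Y → ℝ) : Y → ℝ :=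
  fun y => Real.exp (θ y) / ∑ y', Real.exp (θ y')

/-- Kullback–Leibler divergence between distributions on a finite set. -/
noncomputable def KLdiv {Y : Type*} [Fintype Y] (p q : Y → ℝ) : ℝ :=
  ∑ y, p y * Real.log (p y / q y)

/-- `(P π)(y) = ∑ y' P(y, y') π(y')`. -/
noncomputable def matVec {Y : Type*} [Fintype Y] (P : Y → Y → ℝ) (p : Y → ℝ) : Y → ℝ :=
  fun y => ∑ y', P y y' * p y'

/-- Generalized IPO loss with sampling distribution `Uniform(Y) × Uniform(Y)` and fixed
comparison distribution `μdist` (not differentiated through). -/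
noncomputable def LIPO {Y : Type*} [Fintype Y] (P : Y → Y → ℝ) (β : ℝ) (θref : Y → ℝ)
    (μdist : Y → ℝ) (θ : Y → ℝ) : ℝ :=
  ((Fintype.card Y : ℝ)⁻¹) ^ 2 * ∑ y, ∑ y',
    (Real.log (softmax θ y * softmax θref y' / (softmax θ y' * softmax θref y))
      - β⁻¹ * ∑ y'', μdist y'' * (P y y'' - P y' y'')) ^ 2

lemma sum_exp_pos {Y : Type*} [Fintype Y] [Nonempty Y] (θ : Y → ℝ) :
    0 < ∑ y, Real.exp (θ y) :=
  Finset.sum_pos (fun _ _ => Real.exp_pos _) Finset.univ_nonempty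

lemma softmax_add_const {Y : Type*} [Fintype Y] [Nonempty Y] (θ : Y → ℝ) (c : ℝ) :
    softmax (fun z => θ z + c) = softmax θ := by
  funext y
  unfold softmax
  simp only [Real.exp_add, ← Finset.sum_mul]
  rw [mul_div_mul_right _ _ (Real.exp_ne_zero c)]

lemma log_softmax_ratio {Y : Type*} [Fintype Y] [Nonempty Y] (t r : Y → ℝ) (y y' : Y) :
    Real.log (softmax t y * softmax r y' / (softmax t y' * softmax r y))
      = t y - t y' - (r y - r y') := by
  have ht := sum_exp_pos t
  have hr := sum_exp_pos r
  have h : softmax t y * softmax r y' / (softmax t y' * softmax r y)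
      = Real.exp (t y - t y' - (r y - r y')) := by
    unfold softmax
    rw [Real.exp_sub, Real.exp_sub, Real.exp_sub]
    field_simp
  rw [h, Real.log_exp]

lemma term_deriv {Y : Type*} [Fintype Y] (a : Y → ℝ) (θ : Y → ℝ) (y y' : Y) :
    HasFDerivAt (fun t : Y → ℝ => ((t y - a y) - (t y' - a y')) ^ 2)
      ((2 * ((θ y - a y) - (θ y' - a y'))) •
        (ContinuousLinearMap.proj (R := ℝ) (φ := fun _ : Y => ℝ) y
          - ContinuousLinearMap.proj (R := ℝ) (φ := fun _ : Y => ℝ) y')) θ := by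
  have hy := (ContinuousLinearMap.proj (R := ℝ) (φ := fun _ : Y => ℝ) y).hasFDerivAt (x := θ)
  have hy' := (ContinuousLinearMap.proj (R := ℝ) (φ := fun _ : Y => ℝ) y').hasFDerivAt (x := θ)
  have h : HasFDerivAt (fun t : Y → ℝ => (t y - a y) - (t y' - a y'))
      (ContinuousLinearMap.proj (R := ℝ) (φ := fun _ : Y => ℝ) y
        - ContinuousLinearMap.proj (R := ℝ) (φ := fun _ : Y => ℝ) y') θ :=
    (hy.sub_const (a y)).sub (hy'.sub_const (a y'))
  have := h.mul h
  simp only [pow_two]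
  refine this.congr_fderiv ?_
  rw [← add_smul]
  congr 1
  ring

lemma quad_deriv {Y : Type*} [Fintype Y] (c : ℝ) (a : Y → ℝ) (θ : Y → ℝ) :
    HasFDerivAt (fun t : Y → ℝ => c * ∑ y, ∑ y', ((t y - a y) - (t y' - a y')) ^ 2)
      (c • ∑ y, ∑ y', (2 * ((θ y - a y) - (θ y' - a y'))) •
        (ContinuousLinearMap.proj (R := ℝ) (φ := fun _ : Y => ℝ) y
          - ContinuousLinearMap.proj (R := ℝ) (φ := fun _ : Y => ℝ) y') : (Y → ℝ) →L[ℝ] ℝ) θ :=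
  (HasFDerivAt.fun_sum (fun y _ => HasFDerivAt.fun_sum (fun y' _ => term_deriv a θ y y'))).const_mul c

lemma double_sum_eval {Y : Type*} [Fintype Y] [DecidableEq Y] (g : Y → ℝ) (z : Y) :
    ∑ y, ∑ y', 2 * (g y - g y') * ((Pi.single z 1 : Y → ℝ) y - (Pi.single z 1 : Y → ℝ) y')
      = 4 * (Fintype.card Y : ℝ) * g z - 4 * ∑ y, g y := by
  set χ : Y → ℝ := Pi.single z 1 with hχ
  have expand : ∀ y y' : Y, 2 * (g y - g y') * (χ y - χ y')
      = (2 * (g y * χ y) + 2 * (g y' * χ y')) - ((2 * g y) * χ y' + (2 * χ y) * g y') := by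
    intro y y'; ring
  have h1 : ∑ y, g y * χ y = g z := by simp [hχ, Pi.single_apply]
  have h2 : ∑ y, χ y = 1 := by simp [hχ, Pi.single_apply]
  have inner : ∀ y : Y, ∑ y', 2 * (g y - g y') * (χ y - χ y')
      = ((Fintype.card Y : ℝ) * (2 * (g y * χ y)) + 2 * g z)
        - (2 * g y + (2 * χ y) * ∑ y', g y') := by
    intro y
    simp only [expand, Finset.sum_sub_distrib, Finset.sum_add_distrib, ← Finset.mul_sum,
      Finset.sum_const, Finset.card_univ, nsmul_eq_mul, h1, h2, mul_one]
    ring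
  simp only [inner, Finset.sum_sub_distrib, Finset.sum_add_distrib, ← Finset.mul_sum,
    Finset.sum_const, Finset.card_univ, nsmul_eq_mul, h1, h2]
  have h5 : ∑ x : Y, 2 * χ x * ∑ y' : Y, g y' = 2 * ∑ y' : Y, g y' := by
    have e : ∀ x : Y, 2 * χ x * ∑ y' : Y, g y' = (2 * ∑ y' : Y, g y') * χ x := fun x => by ring
    simp only [e, ← Finset.mul_sum, h2, mul_one]
  rw [h5]
  ring

/-- a single gradient step on the generalized IPO loss with learning rate
`ηβ|Y|/4` induces the same softmax policy as the EGPO-style update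
`θ'' = (1−ηβ) θ + ηβ (θ_ref + (Pμ)/β)`; moreover `θ'` and `θ''` differ by a multiple of the
all-ones vector. -/
theorem ipo_gradient_step_equals_egpo_update
    {Y : Type*} [Fintype Y] [DecidableEq Y] (hY : 2 ≤ Fintype.card Y)
    (P : Y → Y → ℝ)
    (hP0 : ∀ y y', 0 ≤ P y y') (hP1 : ∀ y y', P y y' ≤ 1)
    (hPsum : ∀ y y', P y y' + P y' y = 1)
    (β : ℝ) (hβ : 0 < β) (η : ℝ) (hη : 0 < η)
    (θref : Y → ℝ)
    (μdist : Y → ℝ) (hμdist : (∀ y, 0 ≤ μdist y) ∧ ∑ y, μdist y = 1)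
    (θ θ' θ'' : Y → ℝ)
    (hθ' : θ' = fun z => θ z
      - η * β * (Fintype.card Y : ℝ) / 4 * fderiv ℝ (LIPO P β θref μdist) θ (Pi.single z 1))
    (hθ'' : θ'' = fun z => (1 - η * β) * θ z + η * β * (θref z + matVec P μdist z / β)) :
    softmax θ' = softmax θ'' ∧ ∃ c : ℝ, θ' = fun z => θ'' z + c := by
  haveI : Nonempty Y := Fintype.card_pos_iff.mp (by omega)
  set N : ℝ := (Fintype.card Y : ℝ) with hN
  have hNpos : 0 < N := by
    simp only [hN, Nat.cast_pos]
    omega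
  have hNne : N ≠ 0 := ne_of_gt hNpos
  have hβne : β ≠ 0 := ne_of_gt hβ
  set a : Y → ℝ := fun y => θref y + β⁻¹ * matVec P μdist y with ha
  -- Rewrite LIPO as a quadratic function
  have hμ : ∀ y y' : Y, ∑ y'', μdist y'' * (P y y'' - P y' y'')
      = matVec P μdist y - matVec P μdist y' := by
    intro y y'
    simp only [matVec, mul_sub, Finset.sum_sub_distrib]
    congr 1 <;> exact Finset.sum_congr rfl (fun x _ => mul_comm _ _)
  have hL : LIPO P β θref μdist
      = fun t : Y → ℝ => (N⁻¹) ^ 2 * ∑ y, ∑ y', ((t y - a y) - (t y' - a y')) ^ 2 := by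
    funext t
    unfold LIPO
    rw [hN]
    congr 1
    refine Finset.sum_congr rfl (fun y _ => Finset.sum_congr rfl (fun y' _ => ?_))
    rw [log_softmax_ratio, hμ]
    simp only [ha]
    ring
  have hD : HasFDerivAt (LIPO P β θref μdist)
      (((N⁻¹) ^ 2) • ∑ y, ∑ y', (2 * ((θ y - a y) - (θ y' - a y'))) •
        (ContinuousLinearMap.proj (R := ℝ) (φ := fun _ : Y => ℝ) y
          - ContinuousLinearMap.proj (R := ℝ) (φ := fun _ : Y => ℝ) y') : (Y → ℝ) →L[ℝ] ℝ) θ :=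
    hL ▸ quad_deriv ((N⁻¹) ^ 2) a θ
  have hfd := hD.fderiv
  set S : ℝ := ∑ y, (θ y - a y) with hS
  have heval : ∀ z : Y, fderiv ℝ (LIPO P β θref μdist) θ (Pi.single z 1)
      = (N⁻¹) ^ 2 * (4 * N * (θ z - a z) - 4 * S) := by
    intro z
    rw [hfd]
    have hd := double_sum_eval (fun y => θ y - a y) z
    simp only [ContinuousLinearMap.smul_apply, ContinuousLinearMap.sum_apply,
      ContinuousLinearMap.sub_apply, ContinuousLinearMap.proj_apply, smul_eq_mul]
    simp only [hS, hN]
    rw [← hd]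
  have hkey : ∀ z : Y, θ' z = θ'' z + η * β * S / N := by
    intro z
    simp only [hθ', hθ'']
    rw [heval z]
    have hm : matVec P μdist z / β = β⁻¹ * matVec P μdist z := by
      rw [div_eq_inv_mul]
    rw [hm]
    simp only [ha]
    field_simp
    ring
  have hfun : θ' = fun z => θ'' z + η * β * S / N := funext hkey
  refine ⟨?_, ⟨η * β * S / N, hfun⟩⟩
  rw [hfun, softmax_add_const]
end

section
/- For every β > 0, there exists a unique probability distribution π* on Y such that π*(y) = π_ref(y) exp((Pπ*)(y)/β) / Σ_{y'} π_ref(y') exp((Pπ*)(y')/β) for all y ∈ Y; equivalently, the equation θ = θ_ref + (P π_θ)/β has a solution θ ∈ ℝ^{|Y|}, and the induced softmax policy π_θ is the same for all solutions. -/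
open Real

/-- The probability simplex over a finite set. -/
def simplex (Y : Type*) [Fintype Y] : Set (Y → ℝ) :=
  {p | (∀ y, 0 ≤ p y) ∧ ∑ y, p y = 1}

section helpers
variable {Y : Type*} [Fintype Y]

lemma softmax_sum_pos (θ : Y → ℝ) [Nonempty Y] : 0 < ∑ y, Real.exp (θ y) :=
  Finset.sum_pos (fun y _ => Real.exp_pos _) Finset.univ_nonempty

lemma softmax_pos (θ : Y → ℝ) [Nonempty Y] (y : Y) : 0 < softmax θ y :=
  div_pos (Real.exp_pos _) (softmax_sum_pos θ)

lemma softmax_sum_one (θ : Y → ℝ) [Nonempty Y] : ∑ y, softmax θ y = 1 := by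
  simp only [softmax]
  rw [← Finset.sum_div]
  exact div_self (softmax_sum_pos θ).ne'

lemma matVec_sub (P : Y → Y → ℝ) (u v : Y → ℝ) (y : Y) :
    matVec P u y - matVec P v y = matVec P (fun z => u z - v z) y := by
  simp [matVec, mul_sub, Finset.sum_sub_distrib]

lemma skew_inner_zero (P : Y → Y → ℝ) (hPsum : ∀ y y', P y y' + P y' y = 1)
    (d : Y → ℝ) (hd : ∑ y, d y = 0) : ∑ y, d y * matVec P d y = 0 := by
  have e1 : ∑ y, d y * matVec P d y = ∑ y, ∑ y', d y * P y y' * d y' := by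
    simp [matVec, Finset.mul_sum, mul_assoc]
  have e2 : ∑ y, ∑ y', d y * P y y' * d y' = ∑ y', ∑ y, d y * P y y' * d y' :=
    Finset.sum_comm
  have key : (∑ y, d y * matVec P d y) + (∑ y, d y * matVec P d y) = 0 := by
    rw [e1]
    nth_rewrite 2 [e2]
    rw [← Finset.sum_add_distrib]
    have : ∀ y ∈ Finset.univ, ((∑ y', d y * P y y' * d y') + ∑ y', d y' * P y' y * d y)
        = d y * (∑ y', d y') := by
      intro y _
      rw [← Finset.sum_add_distrib, Finset.mul_sum]
      apply Finset.sum_congr rfl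
      intro y' _
      linear_combination (d y * d y') * hPsum y y'
    rw [Finset.sum_congr rfl this, ← Finset.sum_mul, hd, zero_mul]
  linarith

/-- Key uniqueness lemma via skew-symmetry of `P - 1/2`. -/
lemma fp_unique (P : Y → Y → ℝ) (hPsum : ∀ y y', P y y' + P y' y = 1)
    (β : ℝ) (hβ : 0 < β) (p q : Y → ℝ)
    (hp1 : ∑ y, p y = 1) (hq1 : ∑ y, q y = 1)
    (hppos : ∀ y, 0 < p y) (hqpos : ∀ y, 0 < q y) (s c : ℝ)
    (h : ∀ y, β * (Real.log (p y) - Real.log (q y))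
        = s * (matVec P p y - matVec P q y) + c) : p = q := by
  set d : Y → ℝ := fun y => p y - q y with hd
  have hdsum : ∑ y, d y = 0 := by simp [hd, Finset.sum_sub_distrib, hp1, hq1]
  have hS : ∑ y, d y * (β * (Real.log (p y) - Real.log (q y))) = 0 := by
    have : ∀ y ∈ Finset.univ, d y * (β * (Real.log (p y) - Real.log (q y)))
        = s * (d y * matVec P d y) + d y * c := by
      intro y _
      rw [h y, matVec_sub]
      ring
    rw [Finset.sum_congr rfl this, Finset.sum_add_distrib, ← Finset.mul_sum, ← Finset.sum_mul,
      skew_inner_zero P hPsum d hdsum, hdsum]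
    ring
  have hnn : ∀ y ∈ Finset.univ, 0 ≤ d y * (β * (Real.log (p y) - Real.log (q y))) := by
    intro y _
    rcases le_total (q y) (p y) with hle | hle
    · have : Real.log (q y) ≤ Real.log (p y) := Real.log_le_log (hqpos y) hle
      have h1 : 0 ≤ d y := by simp [hd]; linarith
      apply mul_nonneg h1
      nlinarith
    · have : Real.log (p y) ≤ Real.log (q y) := Real.log_le_log (hppos y) hle
      have h1 : d y ≤ 0 := by simp [hd]; linarith
      have h2 : β * (Real.log (p y) - Real.log (q y)) ≤ 0 := by nlinarith
      nlinarith
  have hz := (Finset.sum_eq_zero_iff_of_nonneg hnn).mp hS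
  funext y
  have := hz y (Finset.mem_univ y)
  rcases mul_eq_zero.mp this with h0 | h0
  · have : p y - q y = 0 := h0
    linarith
  · have : Real.log (p y) = Real.log (q y) := by
      rcases mul_eq_zero.mp h0 with h0 | h0
      · exact absurd h0 hβ.ne'
      · linarith
    calc p y = Real.exp (Real.log (p y)) := (Real.exp_log (hppos y)).symm
    _ = Real.exp (Real.log (q y)) := by rw [this]
    _ = q y := Real.exp_log (hqpos y)

lemma isCompact_simplex : IsCompact (simplex Y) := by
  have hsub : simplex Y ⊆ Set.pi Set.univ (fun _ : Y => Set.Icc (0:ℝ) 1) := by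
    intro p hp y _
    refine ⟨hp.1 y, ?_⟩
    have := Finset.single_le_sum (f := p) (fun i _ => hp.1 i) (Finset.mem_univ y)
    rw [hp.2] at this; exact this
  have hclosed : IsClosed (simplex Y) := by
    have h1 : simplex Y = (⋂ y, {p : Y → ℝ | 0 ≤ p y}) ∩ {p : Y → ℝ | ∑ y, p y = 1} := by
      ext p; simp [simplex, Set.mem_iInter]
    rw [h1]
    exact ((isClosed_iInter fun y => isClosed_le continuous_const (continuous_apply y))).inter
      (isClosed_eq (continuous_finset_sum _ fun y _ => continuous_apply y) continuous_const)
  exact (isCompact_univ_pi fun _ => isCompact_Icc).of_isClosed_subset hclosed hsub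

lemma matVec_continuous (P : Y → Y → ℝ) (y : Y) :
    Continuous fun q : Y → ℝ => matVec P q y :=
  continuous_finset_sum _ fun y' _ => continuous_const.mul (continuous_apply y')

lemma matVec_add_mul (P : Y → Y → ℝ) (u v : Y → ℝ) (t : ℝ) (y : Y) :
    matVec P (fun z => u z + t * v z) y = matVec P u y + t * matVec P v y := by
  simp only [matVec, mul_add, Finset.sum_add_distrib, Finset.mul_sum]
  congr 1
  exact Finset.sum_congr rfl fun y' _ => by ring

lemma phi_diff_le {a b t : ℝ} (hb0 : 0 < b) (hb1 : b ≤ 1) (ht : 0 < t)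
    (ha1 : a ≤ 1) (hal : b / 2 ≤ a) (hd : |a - b| ≤ t) :
    a * Real.log a - b * Real.log b ≤ t * (Real.log 2 - Real.log b + 2) := by
  have ha0 : 0 < a := lt_of_lt_of_le (by linarith) hal
  have hlogb : Real.log b ≤ 0 := Real.log_nonpos hb0.le hb1
  have hloga_le : Real.log a ≤ 0 := Real.log_nonpos ha0.le ha1
  have hloga_ge : Real.log b - Real.log 2 ≤ Real.log a := by
    have h := Real.log_le_log (by positivity) hal
    rwa [Real.log_div hb0.ne' two_ne_zero] at h
  have h2 : (a - b) * Real.log a ≤ t * (Real.log 2 - Real.log b) := by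
    have habs : |Real.log a| ≤ Real.log 2 - Real.log b := by
      rw [abs_le]
      constructor
      · linarith
      · linarith [Real.log_pos (by norm_num : (1:ℝ) < 2)]
    calc (a - b) * Real.log a ≤ |(a - b) * Real.log a| := le_abs_self _
      _ = |a - b| * |Real.log a| := abs_mul _ _
      _ ≤ t * (Real.log 2 - Real.log b) :=
          mul_le_mul hd habs (abs_nonneg _) ht.le
  have h3 : b * (Real.log a - Real.log b) ≤ t := by
    rw [← Real.log_div ha0.ne' hb0.ne']
    have hlx := Real.log_le_sub_one_of_pos (div_pos ha0 hb0)
    have hab : a - b ≤ t := le_of_abs_le hd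
    calc b * Real.log (a / b) ≤ b * (a / b - 1) := by nlinarith
      _ = a - b := by field_simp
      _ ≤ t := hab
  nlinarith [ht.le]

set_option maxHeartbeats 2000000 in
lemma fp_exists [Nonempty Y] (P : Y → Y → ℝ)
    (hP0 : ∀ y y', 0 ≤ P y y') (hP1 : ∀ y y', P y y' ≤ 1)
    (hPsum : ∀ y y', P y y' + P y' y = 1)
    (θref : Y → ℝ) (β : ℝ) (hβ : 0 < β) :
    ∃ q : Y → ℝ, q ∈ simplex Y ∧ (∀ y, 0 < q y) ∧
      ∀ y, q y = softmax θref y * Real.exp (matVec P q y / β)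
          / ∑ y', softmax θref y' * Real.exp (matVec P q y' / β) := by
  classical
  set πr : Y → ℝ := softmax θref with hπr
  have hπpos : ∀ y, 0 < πr y := softmax_pos θref
  have hπsum : ∑ y, πr y = 1 := softmax_sum_one θref
  have hπle1 : ∀ y, πr y ≤ 1 := by
    intro y
    have := Finset.single_le_sum (f := πr) (fun i _ => (hπpos i).le) (Finset.mem_univ y)
    rw [hπsum] at this; exact this
  set Sf : (Y → ℝ) → ℝ := fun p => ∑ y, πr y * Real.exp (matVec P p y / β) with hSf
  have hSpos : ∀ p, 0 < Sf p := fun p =>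
    Finset.sum_pos (fun y _ => mul_pos (hπpos y) (Real.exp_pos _)) Finset.univ_nonempty
  set G : (Y → ℝ) → ℝ := fun p => β * Real.log (Sf p)
      + β * ∑ y, (p y * Real.log (p y) - p y * Real.log (πr y)) with hG
  -- continuity
  have hGcont : Continuous G := by
    apply Continuous.add
    · apply Continuous.mul continuous_const
      apply Continuous.log
      · exact continuous_finset_sum _ fun y _ =>
          continuous_const.mul (Real.continuous_exp.comp ((matVec_continuous P y).div_const β))
      · exact fun p => (hSpos p).ne'
    · apply Continuous.mul continuous_const
      exact continuous_finset_sum _ fun y _ =>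
        (Real.continuous_mul_log.comp (continuous_apply y)).sub
          ((continuous_apply y).mul continuous_const)
  -- minimizer
  obtain ⟨q, hqS, hqmin⟩ := isCompact_simplex.exists_isMinOn
    ⟨πr, fun y => (hπpos y).le, hπsum⟩ hGcont.continuousOn
  have hq1 : ∀ y, q y ≤ 1 := by
    intro y
    have := Finset.single_le_sum (f := q) (fun i _ => hqS.1 i) (Finset.mem_univ y)
    rw [hqS.2] at this; exact this
  -- interiority
  have hqpos : ∀ y, 0 < q y := by
    by_contra hcon
    push_neg at hcon
    obtain ⟨y0, hy0'⟩ := hcon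
    have hy0 : q y0 = 0 := le_antisymm hy0' (hqS.1 y0)
    set C1 : ℝ := ∑ y, |Real.log (πr y)| with hC1
    set K : Y → ℝ := fun y => if q y = 0 then 0 else Real.log 2 - Real.log (q y) + 2 with hK
    have hKnn : ∀ y, 0 ≤ K y := by
      intro y
      simp only [hK]
      split
      · exact le_rfl
      · next h =>
        have hqy : 0 < q y := lt_of_le_of_ne (hqS.1 y) (Ne.symm h)
        have := Real.log_nonpos hqy.le (hq1 y)
        have := Real.log_pos (by norm_num : (1:ℝ) < 2)
        linarith
    set C : ℝ := 1 + β * (C1 + ∑ y, K y) with hC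
    set t : ℝ := min (1/2) (Real.exp (-(C + 1) / (β * πr y0))) with htdef
    have ht0 : 0 < t := lt_min (by norm_num) (Real.exp_pos _)
    have ht2 : t ≤ 1/2 := min_le_left _ _
    have ht1 : t ≤ 1 := by linarith
    have hlogt : Real.log t ≤ -(C + 1) / (β * πr y0) := by
      calc Real.log t ≤ Real.log (Real.exp (-(C + 1) / (β * πr y0))) :=
            Real.log_le_log ht0 (min_le_right _ _)
        _ = -(C + 1) / (β * πr y0) := Real.log_exp _
    set qt : Y → ℝ := fun y => (1 - t) * q y + t * πr y with hqt
    have hqtS : qt ∈ simplex Y := by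
      constructor
      · intro y
        exact add_nonneg (mul_nonneg (by linarith) (hqS.1 y)) (mul_nonneg ht0.le (hπpos y).le)
      · simp only [hqt]
        rw [Finset.sum_add_distrib, ← Finset.mul_sum, ← Finset.mul_sum, hqS.2, hπsum]
        ring
    have hqt1 : ∀ y, qt y ≤ 1 := by
      intro y
      have := Finset.single_le_sum (f := qt) (fun i _ => hqtS.1 i) (Finset.mem_univ y)
      rw [hqtS.2] at this; exact this
    -- L part bound
    have hL : Real.log (Sf qt) ≤ Real.log (Sf q) + t / β := by
      have hterm : ∀ y ∈ Finset.univ, πr y * Real.exp (matVec P qt y / β)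
          ≤ πr y * Real.exp (matVec P q y / β) * Real.exp (t / β) := by
        intro y _
        have e : matVec P qt y = (1 - t) * matVec P q y + t * matVec P πr y := by
          simp only [matVec, hqt, mul_add, Finset.sum_add_distrib, Finset.mul_sum]
          congr 1 <;> exact Finset.sum_congr rfl fun y' _ => by ring
        have h2 : matVec P πr y ≤ 1 := by
          calc matVec P πr y ≤ ∑ y', πr y' :=
              Finset.sum_le_sum fun y' _ => mul_le_of_le_one_left (hπpos y').le (hP1 y y')
            _ = 1 := hπsum
        have h3 : 0 ≤ matVec P q y :=
          Finset.sum_nonneg fun y' _ => mul_nonneg (hP0 y y') (hqS.1 y')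
        have h1 : matVec P qt y ≤ matVec P q y + t := by nlinarith
        calc πr y * Real.exp (matVec P qt y / β)
            ≤ πr y * Real.exp ((matVec P q y + t) / β) := by
              apply mul_le_mul_of_nonneg_left _ (hπpos y).le
              exact Real.exp_le_exp.mpr (div_le_div_of_nonneg_right h1 hβ.le)
          _ = πr y * Real.exp (matVec P q y / β) * Real.exp (t / β) := by
              rw [mul_assoc, ← Real.exp_add]
              congr 2
              field_simp
      have hsum : Sf qt ≤ Sf q * Real.exp (t / β) := by
        calc Sf qt ≤ ∑ y, πr y * Real.exp (matVec P q y / β) * Real.exp (t / β) :=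
            Finset.sum_le_sum hterm
          _ = Sf q * Real.exp (t / β) := by rw [← Finset.sum_mul]
      calc Real.log (Sf qt) ≤ Real.log (Sf q * Real.exp (t / β)) :=
          Real.log_le_log (hSpos qt) hsum
        _ = Real.log (Sf q) + t / β := by rw [Real.log_mul (hSpos q).ne' (Real.exp_ne_zero _), Real.log_exp]
    -- entropy bound
    have hE : ∑ y, (qt y * Real.log (qt y) - qt y * Real.log (πr y))
        ≤ (∑ y, (q y * Real.log (q y) - q y * Real.log (πr y)))
          + t * (C1 + ∑ y, K y) + πr y0 * (t * Real.log t) := by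
      have hterm : ∀ y ∈ Finset.univ, qt y * Real.log (qt y) - qt y * Real.log (πr y)
          ≤ (q y * Real.log (q y) - q y * Real.log (πr y)) + t * K y + t * |Real.log (πr y)|
            + (if y = y0 then πr y0 * (t * Real.log t) else 0) := by
        intro y _
        have hB : qt y * Real.log (πr y) - q y * Real.log (πr y) ≥ -(t * |Real.log (πr y)|) := by
          have hd : qt y - q y = t * (πr y - q y) := by simp [hqt]; ring
          have habs : |qt y - q y| ≤ t := by
            rw [hd, abs_mul, abs_of_pos ht0]
            have : |πr y - q y| ≤ 1 := by
              rw [abs_le]; constructor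
              · linarith [hπpos y, hq1 y]
              · linarith [hπle1 y, hqS.1 y]
            nlinarith
          calc qt y * Real.log (πr y) - q y * Real.log (πr y)
              = (qt y - q y) * Real.log (πr y) := by ring
            _ ≥ -(|qt y - q y| * |Real.log (πr y)|) := by
                rw [← abs_mul]; exact neg_abs_le _
            _ ≥ -(t * |Real.log (πr y)|) := by
                have := abs_nonneg (Real.log (πr y))
                nlinarith
        have hA : qt y * Real.log (qt y) ≤ q y * Real.log (q y) + t * K y
            + (if y = y0 then πr y0 * (t * Real.log t) else 0) := by
          by_cases hyy : y = y0
          · subst hyy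
            rw [if_pos rfl]
            have hKy0 : K y = 0 := by simp only [hK]; rw [if_pos hy0]
            have hqt0 : qt y = t * πr y := by
              show (1 - t) * q y + t * πr y = t * πr y
              rw [hy0]; ring
            rw [hKy0, hy0, hqt0]
            have hlog : Real.log (t * πr y) = Real.log t + Real.log (πr y) :=
              Real.log_mul ht0.ne' (hπpos y).ne'
            rw [hlog]
            have h1 : t * πr y * Real.log (πr y) ≤ 0 :=
              mul_nonpos_of_nonneg_of_nonpos (mul_nonneg ht0.le (hπpos y).le)
                (Real.log_nonpos (hπpos y).le (hπle1 y))
            simp only [Real.log_zero, mul_zero, zero_mul, zero_add, add_zero]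
            nlinarith
          · simp only [if_neg hyy]
            by_cases hq0 : q y = 0
            · have hKy : K y = 0 := by simp only [hK]; rw [if_pos hq0]
              rw [hKy, hq0]
              have hqt0 : qt y = t * πr y := by
                show (1 - t) * q y + t * πr y = t * πr y
                rw [hq0]; ring
              simp only [Real.log_zero, mul_zero, zero_mul, zero_add, add_zero]
              have h1 : 0 ≤ qt y := hqtS.1 y
              have h2 : qt y ≤ 1 := hqt1 y
              have := Real.log_nonpos h1 h2
              nlinarith
            · have hqy : 0 < q y := lt_of_le_of_ne (hqS.1 y) (Ne.symm hq0)
              have hhalf : q y / 2 ≤ qt y := by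
                have : (1 - t) * q y ≥ q y / 2 := by nlinarith
                have h2 : 0 ≤ t * πr y := mul_nonneg ht0.le (hπpos y).le
                simp only [hqt]; linarith
              have habs : |qt y - q y| ≤ t := by
                have hd : qt y - q y = t * (πr y - q y) := by simp [hqt]; ring
                rw [hd, abs_mul, abs_of_pos ht0]
                have : |πr y - q y| ≤ 1 := by
                  rw [abs_le]; constructor
                  · linarith [hπpos y, hq1 y]
                  · linarith [hπle1 y, hqS.1 y]
                nlinarith
              have := phi_diff_le hqy (hq1 y) ht0 (hqt1 y) hhalf habs
              simp only [hK, if_neg hq0]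
              linarith
        linarith
      calc ∑ y, (qt y * Real.log (qt y) - qt y * Real.log (πr y))
          ≤ ∑ y, ((q y * Real.log (q y) - q y * Real.log (πr y)) + t * K y
              + t * |Real.log (πr y)| + (if y = y0 then πr y0 * (t * Real.log t) else 0)) :=
            Finset.sum_le_sum hterm
        _ = (∑ y, (q y * Real.log (q y) - q y * Real.log (πr y)))
              + t * (∑ y, K y) + t * C1 + πr y0 * (t * Real.log t) := by
            rw [Finset.sum_add_distrib, Finset.sum_add_distrib, Finset.sum_add_distrib,
              ← Finset.mul_sum, ← Finset.mul_sum, Finset.sum_ite_eq' Finset.univ y0]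
            simp [hC1]
        _ = (∑ y, (q y * Real.log (q y) - q y * Real.log (πr y)))
              + t * (C1 + ∑ y, K y) + πr y0 * (t * Real.log t) := by ring
    -- combine
    have hmain : G qt ≤ G q + C * t + β * πr y0 * (t * Real.log t) := by
      have h1 : β * Real.log (Sf qt) ≤ β * Real.log (Sf q) + t := by
        have := mul_le_mul_of_nonneg_left hL hβ.le
        rw [mul_add] at this
        calc β * Real.log (Sf qt) ≤ β * Real.log (Sf q) + β * (t / β) := this
          _ = β * Real.log (Sf q) + t := by field_simp
      have h2 := mul_le_mul_of_nonneg_left hE hβ.le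
      simp only [hG]
      calc β * Real.log (Sf qt) + β * ∑ y, (qt y * Real.log (qt y) - qt y * Real.log (πr y))
          ≤ β * Real.log (Sf q) + t + β * ((∑ y, (q y * Real.log (q y) - q y * Real.log (πr y)))
            + t * (C1 + ∑ y, K y) + πr y0 * (t * Real.log t)) := by linarith
        _ = (β * Real.log (Sf q) + β * ∑ y, (q y * Real.log (q y) - q y * Real.log (πr y)))
            + C * t + β * πr y0 * (t * Real.log t) := by simp only [hC]; ring
    have hneg : β * πr y0 * (t * Real.log t) ≤ -(C + 1) * t := by
      have hb : 0 < β * πr y0 := mul_pos hβ (hπpos y0)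
      have := mul_le_mul_of_nonneg_left hlogt (mul_pos hb ht0).le
      calc β * πr y0 * (t * Real.log t) = (β * πr y0 * t) * Real.log t := by ring
        _ ≤ (β * πr y0 * t) * (-(C + 1) / (β * πr y0)) := this
        _ = -(C + 1) * t := by
          field_simp
          rw [mul_div_cancel_left₀ _ (hπpos y0).ne']
    have hlt : G qt < G q := by
      have : G qt ≤ G q + C * t - (C + 1) * t := by linarith
      have h2 : G q + C * t - (C + 1) * t = G q - t := by ring
      linarith
    exact absurd (hqmin hqtS) (not_le.mpr hlt)
  -- first-order conditions
  set F : Y → ℝ := fun w => (∑ y, πr y * Real.exp (matVec P q y / β) * P y w) / Sf q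
      + β * (Real.log (q w) - Real.log (πr w)) with hF
  have hFab : ∀ a b : Y, F a = F b := by
    intro a b
    by_cases hab : a = b
    · rw [hab]
    set d : Y → ℝ := fun y => (if y = a then (1:ℝ) else 0) - (if y = b then 1 else 0) with hd
    have hdsum : ∑ y, d y = 0 := by
      simp only [hd, Finset.sum_sub_distrib, Finset.sum_ite_eq', Finset.mem_univ, if_true]
      ring
    have hdabs : ∀ y, |d y| ≤ 1 := by
      intro y
      have hba : ¬b = a := fun h => hab h.symm
      simp only [hd]
      rcases em (y = a) with h1 | h1 <;> rcases em (y = b) with h2 | h2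
      · exact absurd (h1.symm.trans h2) hab
      all_goals simp [h1, h2, hab, hba]
    obtain ⟨ε, hε, hεle⟩ : ∃ ε > 0, ∀ y, ε ≤ q y := by
      refine ⟨Finset.univ.inf' Finset.univ_nonempty q, ?_, ?_⟩
      · exact (Finset.lt_inf'_iff _).mpr fun y _ => hqpos y
      · exact fun y => Finset.inf'_le _ (Finset.mem_univ y)
    set gs : ℝ → ℝ := fun t => ∑ y, πr y * Real.exp ((matVec P q y + t * matVec P d y) / β)
      with hgs
    set ge : ℝ → ℝ := fun t => ∑ y, ((q y + t * d y) * Real.log (q y + t * d y)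
        - (q y + t * d y) * Real.log (πr y)) with hge
    set g : ℝ → ℝ := fun t => β * Real.log (gs t) + β * ge t with hg
    have hgs0 : gs 0 = Sf q := by simp [hgs, hSf]
    have hgspos : ∀ t, 0 < gs t := fun t =>
      Finset.sum_pos (fun y _ => mul_pos (hπpos y) (Real.exp_pos _)) Finset.univ_nonempty
    have hlocal : IsLocalMin g 0 := by
      filter_upwards [Metric.ball_mem_nhds (0:ℝ) hε] with t ht
      rw [Metric.mem_ball, Real.dist_eq, sub_zero] at ht
      have hmem : (fun y => q y + t * d y) ∈ simplex Y := by
        constructor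
        · intro y
          show 0 ≤ q y + t * d y
          have h1 : |t * d y| ≤ |t| := by
            rw [abs_mul]
            nlinarith [hdabs y, abs_nonneg t]
          have h2 := neg_abs_le (t * d y)
          have := hεle y
          linarith
        · show ∑ y, (q y + t * d y) = 1
          rw [Finset.sum_add_distrib, ← Finset.mul_sum, hdsum, hqS.2]; ring
      have h1 : g t = G (fun y => q y + t * d y) := by
        have e1 : Sf (fun y => q y + t * d y) = gs t := by
          simp only [hSf, hgs]
          exact Finset.sum_congr rfl fun y _ => by rw [matVec_add_mul]
        simp only [hg, hG, e1, hge]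
      have h0 : g 0 = G q := by
        have e2 : ge 0 = ∑ y, (q y * Real.log (q y) - q y * Real.log (πr y)) := by
          simp only [hge]
          apply Finset.sum_congr rfl
          intro y _
          norm_num
        simp only [hg, hG, hgs0, e2]
      rw [h0, h1]
      exact hqmin hmem
    have hgsD : HasDerivAt gs
        (∑ y, πr y * Real.exp (matVec P q y / β) * (matVec P d y / β)) 0 := by
      apply HasDerivAt.fun_sum
      intro y _
      have h1 : HasDerivAt (fun t : ℝ => (matVec P q y + t * matVec P d y) / β)
          (matVec P d y / β) 0 :=
        ((hasDerivAt_mul_const (matVec P d y)).const_add (matVec P q y)).div_const β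
      have h3 := (h1.exp).const_mul (πr y)
      have h4 : πr y * (Real.exp ((matVec P q y + 0 * matVec P d y) / β) * (matVec P d y / β))
          = πr y * Real.exp (matVec P q y / β) * (matVec P d y / β) := by
        rw [zero_mul, add_zero]; ring
      exact h4 ▸ h3
    have hgeD : HasDerivAt ge
        (∑ y, (d y * Real.log (q y) + d y - d y * Real.log (πr y))) 0 := by
      apply HasDerivAt.fun_sum
      intro y _
      have hu : HasDerivAt (fun t : ℝ => q y + t * d y) (d y) 0 :=
        (hasDerivAt_mul_const (d y)).const_add (q y)
      have hlog := hu.log (by simpa using (hqpos y).ne')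
      have hmul := hu.mul hlog
      have hmul2 := hu.mul_const (Real.log (πr y))
      have hval : d y * Real.log (q y + 0 * d y)
          + (q y + 0 * d y) * (d y / (q y + 0 * d y)) - d y * Real.log (πr y)
          = d y * Real.log (q y) + d y - d y * Real.log (πr y) := by
        rw [zero_mul, add_zero]
        have h5 : q y * (d y / q y) = d y := by
          rw [mul_div_assoc']
          exact mul_div_cancel_left₀ (d y) (hqpos y).ne'
        rw [h5]
      exact hval ▸ (hmul.sub hmul2)
    have hgD : HasDerivAt g
        (β * ((∑ y, πr y * Real.exp (matVec P q y / β) * (matVec P d y / β)) / Sf q)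
          + β * ∑ y, (d y * Real.log (q y) + d y - d y * Real.log (πr y))) 0 := by
      have h1 := hgsD.log (hgspos 0).ne'
      rw [hgs0] at h1
      exact (h1.const_mul β).add (hgeD.const_mul β)
    have hD0 : β * ((∑ y, πr y * Real.exp (matVec P q y / β) * (matVec P d y / β)) / Sf q)
        + β * ∑ y, (d y * Real.log (q y) + d y - d y * Real.log (πr y)) = 0 := by
      rw [← hgD.deriv]
      exact hlocal.deriv_eq_zero
    have hMd : ∀ y, matVec P d y = P y a - P y b := by
      intro y
      simp only [matVec, hd, mul_sub, Finset.sum_sub_distrib, mul_ite, mul_one, mul_zero,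
        Finset.sum_ite_eq', Finset.mem_univ, if_true]
    have hsum1 : ∑ y, (d y * Real.log (q y) + d y - d y * Real.log (πr y))
        = (Real.log (q a) - Real.log (πr a)) - (Real.log (q b) - Real.log (πr b)) := by
      simp only [hd, sub_mul, ite_mul, one_mul, zero_mul, Finset.sum_sub_distrib,
        Finset.sum_add_distrib, Finset.sum_ite_eq', Finset.mem_univ, if_true]
      ring
    have hsum2 : ∑ y, πr y * Real.exp (matVec P q y / β) * (matVec P d y / β)
        = ((∑ y, πr y * Real.exp (matVec P q y / β) * P y a)
          - ∑ y, πr y * Real.exp (matVec P q y / β) * P y b) / β := by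
      have h6 : ∀ y ∈ Finset.univ, πr y * Real.exp (matVec P q y / β) * (matVec P d y / β)
          = πr y * Real.exp (matVec P q y / β) * P y a / β
            - πr y * Real.exp (matVec P q y / β) * P y b / β := by
        intro y _; rw [hMd y]; ring
      rw [Finset.sum_congr rfl h6, Finset.sum_sub_distrib, ← Finset.sum_div, ← Finset.sum_div,
        div_sub_div_same]
    rw [hsum1, hsum2] at hD0
    simp only [hF]
    have hSne := (hSpos q).ne'
    have hβne := hβ.ne'
    field_simp at hD0 ⊢
    apply mul_left_cancel₀ hβne
    linear_combination β * hD0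
  -- conclusion via uniqueness lemma
  set pstar : Y → ℝ := fun y => πr y * Real.exp (matVec P q y / β) / Sf q with hpstar
  have hpsum : ∑ y, pstar y = 1 := by
    simp only [hpstar]
    rw [← Finset.sum_div]
    exact div_self (hSpos q).ne'
  have hppos : ∀ y, 0 < pstar y := fun y =>
    div_pos (mul_pos (hπpos y) (Real.exp_pos _)) (hSpos q)
  have y₁ : Y := Classical.arbitrary Y
  have hFc : ∀ y, F y = F y₁ := fun y => hFab y y₁
  have hq_eq : ∀ y, β * Real.log (q y)
      = β * Real.log (πr y) + matVec P pstar y + (F y₁ - 1) := by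
    intro y
    have h1 := hFc y
    simp only [hF] at h1
    have h2 : (∑ z, πr z * Real.exp (matVec P q z / β) * P z y) / Sf q
        = ∑ z, pstar z * P z y := by
      rw [Finset.sum_div]
      exact Finset.sum_congr rfl fun z _ => by simp only [hpstar]; ring
    have h3 : ∑ z, pstar z * P z y = 1 - matVec P pstar y := by
      have h7 : ∀ z ∈ Finset.univ, pstar z * P z y = pstar z - P y z * pstar z := by
        intro z _
        linear_combination (pstar z) * hPsum z y
      rw [Finset.sum_congr rfl h7, Finset.sum_sub_distrib, hpsum]
      simp [matVec]
    rw [h2, h3] at h1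
    have h4 : F y₁ = (∑ z, πr z * Real.exp (matVec P q z / β) * P z y₁) / Sf q
        + β * (Real.log (q y₁) - Real.log (πr y₁)) := by simp only [hF]
    rw [← h4] at h1
    linarith
  have hp_eq : ∀ y, β * Real.log (pstar y)
      = β * Real.log (πr y) + matVec P q y - β * Real.log (Sf q) := by
    intro y
    simp only [hpstar]
    rw [Real.log_div (mul_pos (hπpos y) (Real.exp_pos _)).ne' (hSpos q).ne',
      Real.log_mul (hπpos y).ne' (Real.exp_ne_zero _), Real.log_exp]
    field_simp
  have hkey : ∀ y, β * (Real.log (pstar y) - Real.log (q y))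
      = (-1) * (matVec P pstar y - matVec P q y) + (1 - F y₁ - β * Real.log (Sf q)) := by
    intro y
    have e1 := hq_eq y
    have e2 := hp_eq y
    rw [mul_sub]
    linarith
  have hpq := fp_unique P hPsum β hβ pstar q hpsum hqS.2 hppos hqpos (-1) _ hkey
  refine ⟨q, hqS, hqpos, fun y => ?_⟩
  have h8 := congrFun hpq y
  simp only [hpstar] at h8
  rw [← h8]

end helpers

/-- for every `β > 0` there is a unique distribution `π*` with
`π*(y) ∝ π_ref(y) exp((Pπ*)(y)/β)`; equivalently the equation `θ = θ_ref + P π_θ / β` has a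
solution, and all solutions induce the same softmax policy. -/
theorem qre_exists_unique
    {Y : Type*} [Fintype Y] (hY : 2 ≤ Fintype.card Y)
    (P : Y → Y → ℝ)
    (hP0 : ∀ y y', 0 ≤ P y y') (hP1 : ∀ y y', P y y' ≤ 1)
    (hPsum : ∀ y y', P y y' + P y' y = 1)
    (θref : Y → ℝ) (β : ℝ) (hβ : 0 < β) :
    (∃! p : Y → ℝ, p ∈ simplex Y ∧ p = fun y =>
        softmax θref y * Real.exp (matVec P p y / β)
          / ∑ y', softmax θref y' * Real.exp (matVec P p y' / β))
      ∧ (∃ θ : Y → ℝ, θ = fun y => θref y + matVec P (softmax θ) y / β)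
      ∧ (∀ θ₁ θ₂ : Y → ℝ,
          (θ₁ = fun y => θref y + matVec P (softmax θ₁) y / β) →
          (θ₂ = fun y => θref y + matVec P (softmax θ₂) y / β) →
          softmax θ₁ = softmax θ₂) := by
  haveI : Nonempty Y := Fintype.card_pos_iff.mp (by omega)
  obtain ⟨q, hqS, hqpos, hqfix⟩ := fp_exists P hP0 hP1 hPsum θref β hβ
  -- basic facts about the fixed-point form
  have hSpos : ∀ p : Y → ℝ, 0 < ∑ y', softmax θref y' * Real.exp (matVec P p y' / β) :=
    fun p => Finset.sum_pos
      (fun y _ => mul_pos (softmax_pos θref y) (Real.exp_pos _)) Finset.univ_nonempty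
  have hform : ∀ p : Y → ℝ,
      (∀ y, p y = softmax θref y * Real.exp (matVec P p y / β)
        / ∑ y', softmax θref y' * Real.exp (matVec P p y' / β)) →
      (∀ y, 0 < p y) ∧ ∀ y, β * Real.log (p y)
        = β * Real.log (softmax θref y) + matVec P p y
          - β * Real.log (∑ y', softmax θref y' * Real.exp (matVec P p y' / β)) := by
    intro p hp
    have hpos : ∀ y, 0 < p y := fun y => by
      rw [hp y]
      exact div_pos (mul_pos (softmax_pos θref y) (Real.exp_pos _)) (hSpos p)
    refine ⟨hpos, fun y => ?_⟩
    rw [hp y, Real.log_div (mul_pos (softmax_pos θref y) (Real.exp_pos _)).ne' (hSpos p).ne',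
      Real.log_mul (softmax_pos θref y).ne' (Real.exp_ne_zero _), Real.log_exp]
    field_simp
  have huniq : ∀ p₁ p₂ : Y → ℝ, p₁ ∈ simplex Y → p₂ ∈ simplex Y →
      (∀ y, p₁ y = softmax θref y * Real.exp (matVec P p₁ y / β)
        / ∑ y', softmax θref y' * Real.exp (matVec P p₁ y' / β)) →
      (∀ y, p₂ y = softmax θref y * Real.exp (matVec P p₂ y / β)
        / ∑ y', softmax θref y' * Real.exp (matVec P p₂ y' / β)) → p₁ = p₂ := by
    intro p₁ p₂ h1S h2S h1 h2
    obtain ⟨h1pos, h1log⟩ := hform p₁ h1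
    obtain ⟨h2pos, h2log⟩ := hform p₂ h2
    refine fp_unique P hPsum β hβ p₁ p₂ h1S.2 h2S.2 h1pos h2pos 1
      (β * Real.log (∑ y', softmax θref y' * Real.exp (matVec P p₂ y' / β))
        - β * Real.log (∑ y', softmax θref y' * Real.exp (matVec P p₁ y' / β))) (fun y => ?_)
    have e1 := h1log y
    have e2 := h2log y
    rw [mul_sub]
    linarith
  refine ⟨⟨q, ⟨hqS, funext hqfix⟩, ?_⟩, ?_, ?_⟩
  · -- uniqueness of the distribution
    rintro p ⟨hpS, hpeq⟩
    exact huniq p q hpS hqS (fun y => congrFun hpeq y) hqfix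
  · -- existence of θ
    refine ⟨fun y => θref y + matVec P q y / β, ?_⟩
    have hsθ : softmax (fun y => θref y + matVec P q y / β) = q := by
      funext y
      rw [hqfix y]
      simp only [softmax]
      have hT : (0:ℝ) < ∑ y', Real.exp (θref y') := softmax_sum_pos θref
      have e : ∀ y' : Y, Real.exp (θref y') / (∑ z, Real.exp (θref z))
          * Real.exp (matVec P q y' / β)
          = Real.exp (θref y' + matVec P q y' / β) / (∑ z, Real.exp (θref z)) := by
        intro y'
        rw [Real.exp_add]
        ring
      rw [Finset.sum_congr rfl fun y' _ => e y', e y, ← Finset.sum_div]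
      rw [div_div_div_cancel_right₀]
      exact (softmax_sum_pos θref).ne'
    funext y
    rw [hsθ]
  · -- all θ-solutions induce the same policy
    intro θ₁ θ₂ h₁ h₂
    have hT1 : (0:ℝ) < ∑ y', Real.exp (θ₁ y') := softmax_sum_pos θ₁
    have hT2 : (0:ℝ) < ∑ y', Real.exp (θ₂ y') := softmax_sum_pos θ₂
    have hlog : ∀ θ : Y → ℝ, (θ = fun y => θref y + matVec P (softmax θ) y / β) →
        ∀ y, β * Real.log (softmax θ y)
          = β * θref y + matVec P (softmax θ) y - β * Real.log (∑ y', Real.exp (θ y')) := by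
      intro θ hθ y
      have hy := congrFun hθ y
      simp only [softmax]
      rw [Real.log_div (Real.exp_ne_zero _) (softmax_sum_pos θ).ne', Real.log_exp]
      rw [mul_sub, hy]
      field_simp
    apply fp_unique P hPsum β hβ (softmax θ₁) (softmax θ₂)
      (softmax_sum_one θ₁) (softmax_sum_one θ₂) (softmax_pos θ₁) (softmax_pos θ₂) 1
      (β * Real.log (∑ y', Real.exp (θ₂ y')) - β * Real.log (∑ y', Real.exp (θ₁ y')))
    intro y
    have e1 := hlog θ₁ h₁ y
    have e2 := hlog θ₂ h₂ y
    rw [mul_sub]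
    linarith
end
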